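/- arXiv:2002.05614 — 2 statements merged into one kernel-verified Lean document; each statement's English description precedes it below -/
import Mathlib

section
/- Let E be a real inner product space, let γ > 0 and α > 0, and let a, b, q, p ∈ E satisfy ‖q‖ ≤ α, α • a = ‖a‖ • q, and max(‖b‖, γ) • p = α • b. Then ⟪p − q, a − b⟫ ≤ γ·α. -/
open RealInnerProductSpace

theorem tgv_huber_exact_duality_gap
    {E : Type*} [NormedAddCommGroup E] [InnerProductSpace ℝ E]
    (γ α : ℝ) (hγ : 0 < γ) (hα : 0 < α) (a b q p : E)
    (hq : ‖q‖ ≤ α)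
    (hexact : α • a = ‖a‖ • q)
    (hhuber : max ‖b‖ γ • p = α • b) :
    ⟪p - q, a - b⟫ ≤ γ * α := by
  set m := max ‖b‖ γ with hm
  have hm0 : 0 < m := lt_of_lt_of_le hγ (le_max_right _ _)
  have hpb : m * ⟪p, b⟫ = α * ‖b‖ ^ 2 := by
    have := congrArg (fun x => ⟪x, b⟫) hhuber
    simpa [real_inner_smul_left, real_inner_self_eq_norm_sq] using this
  have hpnorm : m * ‖p‖ = α * ‖b‖ := by
    have := congrArg (fun x => ‖x‖) hhuber
    simp only [norm_smul, Real.norm_eq_abs] at this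
    rwa [abs_of_pos hm0, abs_of_pos hα] at this
  have hqa : α * ⟪q, a⟫ = α ^ 2 * ‖a‖ := by
    rcases eq_or_ne a 0 with h | h
    · simp [h]
    · have hna : (0:ℝ) < ‖a‖ := norm_pos_iff.mpr h
      have hqn : ‖q‖ = α := by
        have := congrArg (fun x => ‖x‖) hexact
        simp only [norm_smul, Real.norm_eq_abs] at this
        rw [abs_of_pos hα, abs_of_pos hna] at this
        nlinarith
      have := congrArg (fun x => ⟪q, x⟫) hexact
      simp only [real_inner_smul_right, real_inner_self_eq_norm_sq] at this
      rw [hqn] at this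
      nlinarith
  have hiqa : ⟪q, a⟫ = α * ‖a‖ :=
    mul_left_cancel₀ hα.ne' (hqa.trans (by ring))
  have hb0 : (0:ℝ) ≤ ‖b‖ := norm_nonneg b
  have ha0 : (0:ℝ) ≤ ‖a‖ := norm_nonneg a
  have hbm : ‖b‖ ≤ m := le_max_left _ _
  have hple : ‖p‖ ≤ α := by nlinarith [norm_nonneg p]
  have hpa : ⟪p, a⟫ ≤ α * ‖a‖ :=
    le_trans (real_inner_le_norm p a) (by nlinarith [real_inner_le_norm p a])
  have hqb : ⟪q, b⟫ ≤ α * ‖b‖ :=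
    le_trans (real_inner_le_norm q b) (mul_le_mul_of_nonneg_right hq hb0)
  have hexp : ⟪p - q, a - b⟫ = ⟪p, a⟫ - ⟪p, b⟫ - ⟪q, a⟫ + ⟪q, b⟫ := by
    simp [inner_sub_left, inner_sub_right]; ring
  rw [hexp, hiqa]
  rcases le_total γ ‖b‖ with h | h
  · have hmv : m = ‖b‖ := max_eq_left h
    rw [hmv] at hpb
    nlinarith [mul_pos hγ hα]
  · have hmv : m = γ := max_eq_right h
    rw [hmv] at hpb
    nlinarith [mul_nonneg hα.le (sq_nonneg (‖b‖ - γ)),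
      mul_le_mul_of_nonneg_left hqb hγ.le, mul_le_mul_of_nonneg_left hpa hγ.le,
      mul_nonneg (mul_nonneg hα.le hγ.le) hb0, mul_pos hγ hα]
end

section
/- Let E be a real inner product space, let γ > 0 and α > 0, and let v ∈ E. Define the Huber-regularized norm φ_γ : E → ℝ by φ_γ(v) = ‖v‖ − γ/2 if ‖v‖ ≥ γ and φ_γ(v) = ‖v‖²/(2γ) if ‖v‖ < γ. Then α·φ_γ(v) is the greatest element of the set { ⟪w, v⟫ − (γ/(2α))‖w‖² : w ∈ E, ‖w‖ ≤ α }; that is, the supremum of ⟪w, v⟫ − (γ/(2α))‖w‖² over the closed ball of radius α equals α·φ_γ(v) and is attained. -/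
open RealInnerProductSpace

/-- The Huber-regularized norm with parameter `γ`. -/
noncomputable def huberNorm {E : Type*} [NormedAddCommGroup E] (γ : ℝ) (v : E) : ℝ :=
  if γ ≤ ‖v‖ then ‖v‖ - γ / 2 else ‖v‖ ^ 2 / (2 * γ)

theorem huberNorm_dual_representation
    {E : Type*} [NormedAddCommGroup E] [InnerProductSpace ℝ E]
    (γ α : ℝ) (hγ : 0 < γ) (hα : 0 < α) (v : E) :
    IsGreatest {r : ℝ | ∃ w : E, ‖w‖ ≤ α ∧ r = ⟪w, v⟫ - (γ / (2 * α)) * ‖w‖ ^ 2}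
      (α * huberNorm γ v) := by
  constructor
  · -- membership
    unfold huberNorm
    by_cases h : γ ≤ ‖v‖
    · rw [if_pos h]
      have hv : ‖v‖ ≠ 0 := (hγ.trans_le h).ne'
      refine ⟨(α / ‖v‖) • v, ?_, ?_⟩
      · rw [norm_smul, Real.norm_eq_abs, abs_of_nonneg (by positivity)]
        field_simp
        norm_num
      · rw [real_inner_smul_left, real_inner_self_eq_norm_sq, norm_smul,
          Real.norm_eq_abs, abs_of_nonneg (by positivity)]
        field_simp
    · rw [if_neg h]
      refine ⟨(α / γ) • v, ?_, ?_⟩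
      · rw [norm_smul, Real.norm_eq_abs, abs_of_nonneg (by positivity)]
        rw [div_mul_eq_mul_div, div_le_iff₀ hγ]
        nlinarith [not_le.mp h]
      · rw [real_inner_smul_left, real_inner_self_eq_norm_sq, norm_smul,
          Real.norm_eq_abs, abs_of_nonneg (by positivity)]
        field_simp
        ring
  · rintro r ⟨w, hw, rfl⟩
    have hiv : ⟪w, v⟫ ≤ ‖w‖ * ‖v‖ := real_inner_le_norm w v
    have hw0 : 0 ≤ ‖w‖ := norm_nonneg w
    unfold huberNorm
    by_cases h : γ ≤ ‖v‖
    · rw [if_pos h]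
      have key : (γ / (2 * α)) * (α ^ 2 - ‖w‖ ^ 2) ≤ (α - ‖w‖) * ‖v‖ := by
        rw [div_mul_eq_mul_div, div_le_iff₀ (by positivity)]
        nlinarith [mul_nonneg (mul_nonneg (sub_nonneg.2 hw) hα.le) (sub_nonneg.2 h),
          mul_nonneg hγ.le (sq_nonneg (α - ‖w‖))]
      have hs : γ / (2 * α) * α ^ 2 = α * (γ / 2) := by field_simp
      nlinarith
    · rw [if_neg h]
      have key : 0 ≤ (γ / (2 * α)) * (‖w‖ - α * ‖v‖ / γ) ^ 2 := by positivity
      have h2 : (γ / (2 * α)) * (‖w‖ - α * ‖v‖ / γ) ^ 2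
          = (γ / (2 * α)) * ‖w‖ ^ 2 - ‖w‖ * ‖v‖ + α * (‖v‖ ^ 2 / (2 * γ)) := by
        field_simp
        ring
      nlinarith
end
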